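/- The top coefficient in the expansion of a product of derivatives of δ_+ satisfies C^{a_1,...,a_n}_{n-1+Σa_k} = (∏_{k=1}^n a_k!)/(n-1+Σ_{k=1}^n a_k)!. -/

import Mathlib

open Finset Polynomial

-- lower-index Vandermonde
lemma vandL : ∀ (M a b : ℕ),
    ∑ p ∈ Finset.HasAntidiagonal.antidiagonal M, p.1.choose a * p.2.choose b = (M + 1).choose (a + b + 1) := by
  intro M
  induction M with
  | zero =>
    intro a b
    rw [Finset.Nat.antidiagonal_zero, Finset.sum_singleton]
    rcases Nat.eq_zero_or_pos (a + b) with h | h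
    · obtain ⟨rfl, rfl⟩ : a = 0 ∧ b = 0 := by omega
      rfl
    · have h1 : (0 + 1).choose (a + b + 1) = 0 := Nat.choose_eq_zero_of_lt (by omega)
      rcases Nat.eq_zero_or_pos a with rfl | ha
      · have h2 : Nat.choose 0 b = 0 := Nat.choose_eq_zero_of_lt (by omega)
        simp [h1, h2, Nat.choose_eq_zero_of_lt (show 1 < b + 1 by omega)]
      · have h2 : Nat.choose 0 a = 0 := Nat.choose_eq_zero_of_lt ha
        simp [h1, h2]
  | succ M ih =>
    intro a b
    cases b with
    | zero =>
      rw [Finset.Nat.sum_antidiagonal_eq_sum_range_succ_mk]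
      simp only [Nat.choose_zero_right, mul_one]
      have hsub : Finset.Icc a (M + 1) ⊆ Finset.range (M + 2) := by
        intro x hx; simp only [Finset.mem_Icc] at hx; simp; omega
      rw [← Finset.sum_subset hsub (fun x hx hx' => by
        simp only [Finset.mem_Icc, Finset.mem_range, not_and, not_le] at hx hx'
        exact Nat.choose_eq_zero_of_lt (by omega))]
      rw [Nat.sum_Icc_choose]
    | succ b =>
      rw [Finset.Nat.sum_antidiagonal_succ']
      have h0 : (M + 1).choose a * Nat.choose 0 (b + 1) = 0 := by simp
      rw [h0, zero_add]
      have : ∀ p : ℕ × ℕ, p.1.choose a * (p.2 + 1).choose (b + 1)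
          = p.1.choose a * p.2.choose b + p.1.choose a * p.2.choose (b + 1) := by
        intro p; rw [Nat.choose_succ_succ, Nat.mul_add]
      rw [Finset.sum_congr rfl fun p _ => this p, Finset.sum_add_distrib, ih a b, ih a (b + 1),
        show a + (b + 1) + 1 = a + b + 1 + 1 by ring, Nat.choose_succ_succ (M + 1)]

-- recursion for sums over antidiagonalTuple
lemma sum_adTuple_succ {M : Type*} [AddCommMonoid M] (n N : ℕ) (f : (Fin (n + 1) → ℕ) → M) :
    ∑ t ∈ Finset.Nat.antidiagonalTuple (n + 1) N, f t
      = ∑ p ∈ Finset.HasAntidiagonal.antidiagonal N, ∑ t ∈ Finset.Nat.antidiagonalTuple n p.2,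
          f (Fin.cons p.1 t) := by
  rw [Finset.sum_sigma']
  refine Finset.sum_nbij' (fun t => ⟨(t 0, ∑ i : Fin n, t i.succ), Fin.tail t⟩)
    (fun q => Fin.cons q.1.1 q.2) ?_ ?_ ?_ ?_ ?_
  · intro t ht
    rw [Finset.Nat.mem_antidiagonalTuple] at ht
    simp only [Finset.mem_sigma, Finset.Nat.mem_antidiagonalTuple, Finset.HasAntidiagonal.mem_antidiagonal]
    refine ⟨?_, rfl⟩
    rw [← ht, Fin.sum_univ_succ]
  · intro q hq
    simp only [Finset.mem_sigma, Finset.Nat.mem_antidiagonalTuple, Finset.HasAntidiagonal.mem_antidiagonal] at hq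
    rw [Finset.Nat.mem_antidiagonalTuple, Fin.sum_univ_succ]
    simp only [Fin.cons_zero, Fin.cons_succ]
    rw [hq.2, hq.1]
  · intro t ht
    exact Fin.cons_self_tail t
  · rintro ⟨⟨p1, p2⟩, t⟩ hq
    simp only [Finset.mem_sigma, Finset.Nat.mem_antidiagonalTuple,
      Finset.HasAntidiagonal.mem_antidiagonal] at hq
    simp only [Fin.cons_zero, Fin.cons_succ, Fin.tail_cons]
    rw [hq.2]
  · intro t ht
    rw [Fin.cons_self_tail]

-- tuple Vandermonde
lemma tupleVand : ∀ (n : ℕ) (j : Fin (n + 1) → ℕ) (N : ℕ),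
    ∑ t ∈ Finset.Nat.antidiagonalTuple (n + 1) N, ∏ i, (t i).choose (j i)
      = (N + n).choose (∑ i, j i + n) := by
  intro n
  induction n with
  | zero =>
    intro j N
    rw [Finset.Nat.antidiagonalTuple_one, Finset.sum_singleton]
    simp
  | succ n ih =>
    intro j N
    rw [sum_adTuple_succ]
    have step : ∀ p : ℕ × ℕ, p ∈ Finset.HasAntidiagonal.antidiagonal N →
        (∑ t ∈ Finset.Nat.antidiagonalTuple (n + 1) p.2,
          ∏ i : Fin (n + 2), ((Fin.cons p.1 t : Fin (n+2) → ℕ) i).choose (j i))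
        = p.1.choose (j 0) * (p.2 + n).choose (∑ i : Fin (n + 1), j i.succ + n) := by
      intro p _
      rw [← ih (fun i => j i.succ) p.2, Finset.mul_sum]
      refine Finset.sum_congr rfl fun t _ => ?_
      rw [Fin.prod_univ_succ]
      simp only [Fin.cons_zero, Fin.cons_succ]
    rw [Finset.sum_congr rfl step]
    -- now reduce to vandL over antidiagonal (N + n)
    have key : ∑ p ∈ Finset.HasAntidiagonal.antidiagonal N,
          p.1.choose (j 0) * (p.2 + n).choose (∑ i : Fin (n + 1), j i.succ + n)
        = (N + n + 1).choose (j 0 + (∑ i : Fin (n + 1), j i.succ + n) + 1) := by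
      rw [← vandL (N + n) (j 0) (∑ i : Fin (n + 1), j i.succ + n)]
      rw [Finset.Nat.sum_antidiagonal_eq_sum_range_succ_mk,
        Finset.Nat.sum_antidiagonal_eq_sum_range_succ_mk]
      have hsub : Finset.range (N + 1) ⊆ Finset.range (N + n + 1) := by
        intro x; simp only [Finset.mem_range]; omega
      rw [← Finset.sum_subset hsub (fun x hx hx' => by
        simp only [Finset.mem_range] at hx hx'
        have hlt : N + n - x < ∑ i : Fin (n + 1), j i.succ + n := by omega
        simp [Nat.choose_eq_zero_of_lt hlt])]
      refine Finset.sum_congr rfl fun x hx => ?_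
      simp only [Finset.mem_range] at hx
      congr 2
      omega
    rw [key]
    conv_rhs => rw [Fin.sum_univ_succ]
    congr 1
    all_goals omega

-- k * C(k,j) = (j+1) C(k,j+1) + j C(k,j) in ℚ
lemma mul_choose_step (k j : ℕ) :
    (k : ℚ) * k.choose j = (j + 1) * k.choose (j + 1) + j * k.choose j := by
  rcases le_or_gt j k with h | h
  · have hnat : k.choose (j + 1) * (j + 1) = k.choose j * (k - j) := Nat.choose_succ_right_eq k j
    have hq : ((k.choose (j + 1) * (j + 1) : ℕ) : ℚ) = ((k.choose j * (k - j) : ℕ) : ℚ) := by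
      rw [hnat]
    push_cast [Nat.cast_sub h] at hq
    linear_combination -hq
  · rw [Nat.choose_eq_zero_of_lt h, Nat.choose_eq_zero_of_lt (by omega)]
    simp

lemma mono_expand (a : ℕ) : ∃ c : ℕ → ℚ, c a = a.factorial ∧ (∀ j, a < j → c j = 0) ∧
    ∀ k : ℕ, (k : ℚ) ^ a = ∑ j ∈ Finset.range (a + 1), c j * k.choose j := by
  induction a with
  | zero =>
    refine ⟨fun j => if j = 0 then 1 else 0, by simp, fun j hj => by simp only [if_neg (by omega : ¬ j = 0)], fun k => by simp⟩
  | succ a ih =>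
    obtain ⟨c, hca, hc0, hsum⟩ := ih
    refine ⟨fun j => j * c j + j * c (j - 1), ?_, ?_, ?_⟩
    · have h1 : c (a + 1) = 0 := hc0 _ (by omega)
      simp only [h1, Nat.add_sub_cancel, hca, mul_zero, zero_add]
      push_cast [Nat.factorial_succ]
      ring
    · intro j hj
      have h1 : c j = 0 := hc0 _ (by omega)
      have h2 : c (j - 1) = 0 := hc0 _ (by omega)
      simp [h1, h2]
    · intro k
      have : (k : ℚ) ^ (a + 1) = ∑ j ∈ Finset.range (a + 1), c j * (k * k.choose j) := by
        rw [pow_succ, hsum k, Finset.sum_mul]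
        refine Finset.sum_congr rfl fun j _ => by ring
      rw [this]
      have expand : ∀ j ∈ Finset.range (a + 1), c j * ((k : ℚ) * k.choose j)
          = (c j * ((j + 1) * k.choose (j + 1))) + (c j * (j * k.choose j)) := by
        intro j _
        rw [mul_choose_step]
        ring
      rw [Finset.sum_congr rfl expand, Finset.sum_add_distrib]
      have e1 : ∑ j ∈ Finset.range (a + 2), ((j : ℚ) * c (j - 1)) * k.choose j
          = ∑ j ∈ Finset.range (a + 1), c j * (((j : ℚ) + 1) * k.choose (j + 1)) := by
        rw [Finset.sum_range_succ' (fun j => ((j : ℚ) * c (j - 1)) * k.choose j) (a + 1)]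
        simp only [Nat.cast_zero, zero_mul, Nat.cast_add, Nat.cast_one, add_zero]
        refine Finset.sum_congr rfl fun j _ => ?_
        simp only [Nat.add_sub_cancel]
        ring
      have e2 : ∑ j ∈ Finset.range (a + 2), ((j : ℚ) * c j) * k.choose j
          = ∑ j ∈ Finset.range (a + 1), c j * ((j : ℚ) * k.choose j) := by
        rw [Finset.sum_range_succ]
        rw [hc0 (a + 1) (by omega)]
        simp only [mul_zero, zero_mul, add_zero]
        refine Finset.sum_congr rfl fun j _ => by ring
      have split : ∑ j ∈ Finset.range (a + 2), ((j : ℚ) * c j + j * c (j - 1)) * k.choose j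
          = ∑ j ∈ Finset.range (a + 2), ((j : ℚ) * c j) * k.choose j
            + ∑ j ∈ Finset.range (a + 2), ((j : ℚ) * c (j - 1)) * k.choose j := by
        rw [← Finset.sum_add_distrib]
        refine Finset.sum_congr rfl fun j _ => by ring
      rw [split, e1, e2, add_comm]

/-- The top coefficient satisfies
`C^{a₁,...,aₙ}_{n-1+∑aₖ} = (∏ aₖ!)/(n-1+∑aₖ)!`, where `C^{a₁,...,aₙ}_{n-1+∑aₖ}` equals the top
coefficient of the polynomial `C̃(N) = ∑_{k₁+...+kₙ=N} ∏ kᵢ^{aᵢ}` in `N`. -/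
theorem delta_plus_top_coefficient (n : ℕ) (hn : 1 ≤ n) (a : Fin n → ℕ) (ha : ∀ i, 1 ≤ a i)
    (p : Polynomial ℚ)
    (hp : ∀ N : ℕ, p.eval (N : ℚ) =
        ∑ t ∈ Finset.Nat.antidiagonalTuple n N, ∏ i : Fin n, (t i : ℚ) ^ a i) :
    p.coeff (n - 1 + ∑ i, a i) =
      ((∏ i, (a i).factorial : ℕ) : ℚ) / (((n - 1 + ∑ i, a i).factorial : ℕ) : ℚ) := by
  obtain ⟨m, rfl⟩ : ∃ m, n = m + 1 := ⟨n - 1, by omega⟩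
  simp only [Nat.add_sub_cancel]
  choose c hc1 hc2 hc3 using fun i : Fin (m + 1) => mono_expand (a i)
  -- binomial polynomials
  set B : ℕ → Polynomial ℚ := fun d =>
    Polynomial.C ((d.factorial : ℚ)⁻¹) * (descPochhammer ℚ d).comp (X + Polynomial.C (m : ℚ))
    with hBdef
  have hBeval : ∀ d N : ℕ, (B d).eval (N : ℚ) = ((N + m).choose d : ℚ) := by
    intro d N
    rw [hBdef]
    simp only [eval_mul, eval_C, eval_comp, eval_add, eval_X]
    have : ((N : ℚ) + (m : ℚ)) = ((N + m : ℕ) : ℚ) := by push_cast; ring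
    rw [this, descPochhammer_eval_eq_descFactorial,
      Nat.descFactorial_eq_factorial_mul_choose]
    push_cast
    rw [← mul_assoc, inv_mul_cancel₀ (by exact_mod_cast d.factorial_ne_zero), one_mul]
  have hBmonic : ∀ d, ((descPochhammer ℚ d).comp (X + Polynomial.C (m : ℚ))).Monic :=
    fun d => (monic_descPochhammer ℚ d).comp_X_add_C _
  have hBdeg : ∀ d, ((descPochhammer ℚ d).comp (X + Polynomial.C (m : ℚ))).natDegree = d := by
    intro d
    rw [natDegree_comp, descPochhammer_natDegree, natDegree_X_add_C, mul_one]
  -- the explicit polynomial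
  set q : Polynomial ℚ := ∑ j ∈ Fintype.piFinset (fun i : Fin (m + 1) => Finset.range (a i + 1)),
    Polynomial.C (∏ i, c i (j i)) * B (∑ i, j i + m) with hqdef
  have hq : ∀ N : ℕ, p.eval (N : ℚ) = q.eval (N : ℚ) := by
    intro N
    rw [hp N, hqdef, Polynomial.eval_finset_sum]
    have lhs1 : ∀ t : Fin (m + 1) → ℕ, (∏ i : Fin (m + 1), (t i : ℚ) ^ a i)
        = ∑ j ∈ Fintype.piFinset (fun i : Fin (m + 1) => Finset.range (a i + 1)),
            (∏ i, c i (j i)) * ∏ i, ((t i).choose (j i) : ℚ) := by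
      intro t
      rw [Finset.prod_congr rfl fun i _ => hc3 i (t i), Finset.prod_univ_sum]
      refine Finset.sum_congr rfl fun j _ => ?_
      rw [← Finset.prod_mul_distrib]
    rw [Finset.sum_congr rfl fun t _ => lhs1 t, Finset.sum_comm]
    refine Finset.sum_congr rfl fun j _ => ?_
    rw [eval_mul, eval_C, hBeval, ← Finset.mul_sum]
    congr 1
    have : ∀ t : Fin (m + 1) → ℕ, (∏ i, ((t i).choose (j i) : ℚ))
        = ((∏ i, (t i).choose (j i) : ℕ) : ℚ) := fun t => by push_cast; rfl
    rw [Finset.sum_congr rfl fun t _ => this t, ← Nat.cast_sum, tupleVand m j N]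
  have hpq : p = q := by
    refine Polynomial.eq_of_infinite_eval_eq p q ?_
    apply Set.Infinite.mono (s := Set.range ((↑) : ℕ → ℚ))
    · rintro x ⟨N, rfl⟩
      exact hq N
    · exact Set.infinite_range_of_injective Nat.cast_injective
  rw [hpq, hqdef, Polynomial.finset_sum_coeff]
  rw [Finset.sum_eq_single a]
  · rw [Polynomial.coeff_C_mul]
    have hsum : ∑ i, a i + m = m + ∑ i, a i := by ring
    rw [hsum, hBdef]
    simp only []
    rw [Polynomial.coeff_C_mul]
    have := (hBmonic (m + ∑ i, a i)).coeff_natDegree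
    rw [hBdeg] at this
    rw [this, mul_one]
    rw [Finset.prod_congr rfl fun i _ => hc1 i]
    rw [← Nat.cast_prod]
    rw [div_eq_mul_inv]
  · intro j hj hja
    have hjle : ∀ i, j i ≤ a i := by
      intro i
      have := (Fintype.mem_piFinset.mp hj) i
      simp only [Finset.mem_range] at this
      omega
    have hlt : ∑ i, j i < ∑ i, a i := by
      obtain ⟨i0, hi0⟩ := Function.ne_iff.mp hja
      exact Finset.sum_lt_sum (fun i _ => hjle i) ⟨i0, Finset.mem_univ _, by
        have := hjle i0; omega⟩
    rw [Polynomial.coeff_C_mul]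
    have hdeg : (B (∑ i, j i + m)).natDegree < m + ∑ i, a i := by
      calc (B (∑ i, j i + m)).natDegree ≤ (∑ i, j i + m) := by
            rw [hBdef]
            refine le_trans (natDegree_C_mul_le _ _) ?_
            rw [hBdeg]
        _ < m + ∑ i, a i := by omega
    rw [Polynomial.coeff_eq_zero_of_natDegree_lt hdeg, mul_zero]
  · intro hna
    exact absurd (Fintype.mem_piFinset.mpr fun i => Finset.mem_range.mpr (by omega)) hna
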